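/- Suppose Tab(λ/μ) is the set of standard skew tableaux of a horizontal strip λ/μ with rows of lengths b_1,…,b_t. Working over ℝ with Young's orthonormal basis {Φ_T : T ∈ Tab(λ/μ)} of S^{λ/μ}, the one-dimensional space of S_{b−a}-invariants is spanned by the unique element of the form Σ_{T ∈ Tab(λ/μ)} β_T Φ_T with β_{T^rev} = 1; its coefficients satisfy: whenever T'' = s_i T' with both T', T'' standard, β_{T''}/β_{T'} = √((r−1)/(r+1)) where r = r_i(T') ∉ {−1, 0, 1} is the axial distance from i+1 to i in T'. In particular all β_T are nonzero. -/

import Mathlib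

open scoped Classical

/-- A partition: a weakly decreasing sequence of naturals that is eventually zero. -/
def IsPartition (l : ℕ → ℕ) : Prop := Antitone l ∧ ∃ N, ∀ i, N ≤ i → l i = 0

/-- The cells (Young diagram) of a partition, indexed by (row, column), 0-indexed. -/
def cells (l : ℕ → ℕ) : Set (ℕ × ℕ) := {p | p.2 < l p.1}

/-- Containment of (the Young diagrams of) partitions: `m ⊆ l`. -/
def SubDiagram (m l : ℕ → ℕ) : Prop := ∀ i, m i ≤ l i

/-- The skew diagram `l / m`. -/
def skewCells (l m : ℕ → ℕ) : Set (ℕ × ℕ) := cells l \ cells m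

/-- A set of cells is a horizontal strip if each column contains at most one cell. -/
def IsHorizontalStrip (s : Set (ℕ × ℕ)) : Prop :=
  ∀ p ∈ s, ∀ q ∈ s, p.2 = q.2 → p = q

/-- A set of cells is a vertical strip if each row contains at most one cell. -/
def IsVerticalStrip (s : Set (ℕ × ℕ)) : Prop :=
  ∀ p ∈ s, ∀ q ∈ s, p.1 = q.1 → p = q

/-- `λ̄`: the partition obtained from `λ` by deleting its first row. -/
def rowBar (l : ℕ → ℕ) : ℕ → ℕ := fun i => l (i + 1)

/-- `λ'`: the partition obtained from `λ` by deleting its first column. -/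
def colBar (l : ℕ → ℕ) : ℕ → ℕ := fun i => l i - 1

/-- The transpose (conjugate) partition. -/
noncomputable def transposeP (l : ℕ → ℕ) : ℕ → ℕ := fun j => Set.ncard {i | j < l i}

/-- `λ ⊢ n`: a partition of `n`. -/
def IsPartitionOfSize (l : ℕ → ℕ) (n : ℕ) : Prop := IsPartition l ∧ (cells l).ncard = n

/-- intersection of partitions (componentwise min / intersection of diagrams) -/
def interP (l m : ℕ → ℕ) : ℕ → ℕ := fun i => min (l i) (m i)

/-- A standard skew tableau of shape `l/m` with entries `1,…,n` (taking the value `0`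
outside the skew diagram): a bijective labelling of the cells of `l/m` by `{1,…,n}`
which increases along rows and down columns. Taking `m = 0` gives standard Young
tableaux of shape `l`. -/
def IsSkewSYT (l m : ℕ → ℕ) (n : ℕ) (t : ℕ × ℕ → ℕ) : Prop :=
  Set.BijOn t (skewCells l m) (Set.Icc 1 n) ∧
  (∀ p, p ∉ skewCells l m → t p = 0) ∧
  (∀ p ∈ skewCells l m, ∀ q ∈ skewCells l m, p.1 = q.1 → p.2 < q.2 → t p < t q) ∧
  (∀ p ∈ skewCells l m, ∀ q ∈ skewCells l m, p.2 = q.2 → p.1 < q.1 → t p < t q)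

open Equiv

/-- `Fin a` is equivalent to the subtype of `Fin b` of elements `< a`. -/
def finCastEquiv (a b : ℕ) (hab : a ≤ b) : Fin a ≃ {x : Fin b // (x : ℕ) < a} where
  toFun i := ⟨⟨i, lt_of_lt_of_le i.isLt hab⟩, i.isLt⟩
  invFun x := ⟨x.1, x.2⟩
  left_inv _ := rfl
  right_inv _ := rfl

/-- The inclusion `S_a ⊆ S_b` (extending a permutation of `{0,…,a-1}` by the identity). -/
def extPerm {a b : ℕ} (hab : a ≤ b) : Equiv.Perm (Fin a) →* Equiv.Perm (Fin b) :=
  Equiv.Perm.extendDomainHom (finCastEquiv a b hab)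

/-- `(g,h) • f = g ∘ f ∘ h⁻¹` on injections `Fin a ↪ Fin b`. -/
def injSmul {a b : ℕ} (g : Equiv.Perm (Fin b) × Equiv.Perm (Fin a))
    (f : Fin a ↪ Fin b) : Fin a ↪ Fin b :=
  ((g.2⁻¹.toEmbedding).trans f).trans g.1.toEmbedding

@[simp] theorem injSmul_apply {a b : ℕ} (g : Equiv.Perm (Fin b) × Equiv.Perm (Fin a))
    (f : Fin a ↪ Fin b) (x : Fin a) : injSmul g f x = g.1 (f (g.2⁻¹ x)) := rfl

/-- The action of `S_b × S_a` on injections `Fin a ↪ Fin b`. -/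
instance injMulAction (a b : ℕ) :
    MulAction (Equiv.Perm (Fin b) × Equiv.Perm (Fin a)) (Fin a ↪ Fin b) where
  smul := injSmul
  one_smul f := Function.Embedding.ext fun x => by
    show injSmul 1 f x = f x
    simp
  mul_smul g h f := Function.Embedding.ext fun x => by
    show injSmul _ f _ = injSmul g (injSmul h f) x
    simp [Equiv.Perm.mul_apply, mul_inv_rev]

theorem injSmul_def (a b : ℕ) (g : Equiv.Perm (Fin b) × Equiv.Perm (Fin a))
    (f : Fin a ↪ Fin b) : g • f = injSmul g f := rfl

open Equiv TensorProduct

/-- Functions `Fin n → ℕ` whose fiber over `j` has cardinality `l j`; the `S_n`-set whose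
permutation module is the Young module `M^l` (induced from the trivial module of the
Young subgroup of shape `l`). -/
def YoungSet (n : ℕ) (l : ℕ → ℕ) : Type :=
  {f : Fin n → ℕ // ∀ j, (Finset.univ.filter (fun i => f i = j)).card = l j}

instance youngAction (n : ℕ) (l : ℕ → ℕ) :
    MulAction (Equiv.Perm (Fin n)) (YoungSet n l) where
  smul g f := ⟨fun i => f.1 (g⁻¹ i), by
    intro j
    rw [← f.2 j]
    apply Finset.card_bij (fun i _ => g⁻¹ i)
    · intro i hi
      simp only [Finset.mem_filter, Finset.mem_univ, true_and] at hi ⊢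
      exact hi
    · intro i _ i' _ h
      exact g⁻¹.injective h
    · intro i hi
      simp only [Finset.mem_filter, Finset.mem_univ, true_and] at hi ⊢
      exact ⟨g i, by simpa using hi, by simp⟩⟩
  one_smul f := Subtype.ext (funext fun i => by
    show f.1 ((1 : Equiv.Perm (Fin n))⁻¹ i) = f.1 i
    simp)
  mul_smul g h f := Subtype.ext (funext fun i => by
    show f.1 ((g * h)⁻¹ i) = f.1 (h⁻¹ (g⁻¹ i))
    simp [mul_inv_rev, Equiv.Perm.mul_apply])

/-- The (characterizing) property of being the Specht module `S^l` of `S_n` over `k`: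
an irreducible module admitting a nonzero equivariant map to the Young permutation
module `M^l`, and a nonzero sign-twisted equivariant map to `M^{lᵗ}`.  In characteristic
zero this characterizes `S^l` up to isomorphism, with the convention that `S^{(n)}` is
trivial and `S^{(1ⁿ)}` is the sign representation. -/
def IsSpechtRep (k : Type) [Field k] {n : ℕ} {V : Type} [AddCommGroup V] [Module k V]
    (ρ : Representation k (Equiv.Perm (Fin n)) V) (l : ℕ → ℕ) : Prop :=
  IsSimpleModule (MonoidAlgebra k (Equiv.Perm (Fin n))) ρ.asModule ∧
  (∃ φ : V →ₗ[k] (YoungSet n l →₀ k), φ ≠ 0 ∧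
    ∀ g v, φ (ρ g v) =
      Finsupp.lmapDomain k k (fun x : YoungSet n l => g • x) (φ v)) ∧
  (∃ ψ : V →ₗ[k] (YoungSet n (transposeP l) →₀ k), ψ ≠ 0 ∧
    ∀ g v, ψ (ρ g v) = ((Equiv.Perm.sign g : ℤ) : k) •
      Finsupp.lmapDomain k k (fun x : YoungSet n (transposeP l) => g • x) (ψ v))

/-- The exterior tensor product `ρ ⊠ σ` of representations of `G` and `H`,
a representation of `G × H`. -/
noncomputable def boxtimes {k G H V W : Type} [CommRing k] [Monoid G] [Monoid H]
    [AddCommGroup V] [Module k V] [AddCommGroup W] [Module k W]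
    (ρ : Representation k G V) (σ : Representation k H W) :
    Representation k (G × H) (TensorProduct k V W) :=
  Representation.tprod (ρ.comp (MonoidHom.fst G H)) (σ.comp (MonoidHom.snd G H))

/-- The submodule of vectors invariant under the action of a subset `S` of the group. -/
def invariantsUnder {k G V : Type} [CommRing k] [Monoid G] [AddCommGroup V] [Module k V]
    (ρ : Representation k G V) (S : Set G) : Submodule k V where
  carrier := {v | ∀ g ∈ S, ρ g v = v}
  add_mem' := by
    intro x y hx hy g hg
    rw [map_add, hx g hg, hy g hg]
  zero_mem' := by
    intro g hg
    rw [map_zero]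
  smul_mem' := by
    intro c x hx g hg
    rw [map_smul, hx g hg]

namespace Strip

def ctZ (p : ℕ × ℕ) : ℤ := (p.2 : ℤ) - (p.1 : ℤ)

variable {l m : ℕ → ℕ}

theorem mem_skew {p : ℕ × ℕ} : p ∈ skewCells l m ↔ p.2 < l p.1 ∧ m p.1 ≤ p.2 := by
  simp [skewCells, cells, Set.mem_diff, not_lt]




variable (hL : Antitone l) (hbar : SubDiagram (rowBar l) m)
include hL hbar

theorem rows_cols {p q : ℕ × ℕ} (hp : p ∈ skewCells l m) (hq : q ∈ skewCells l m)
    (h : p.1 < q.1) : q.2 < p.2 := by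
  rw [mem_skew] at hp hq
  calc q.2 < l q.1 := hq.1
    _ ≤ l (p.1 + 1) := hL h
    _ ≤ m p.1 := hbar p.1
    _ ≤ p.2 := hp.2

theorem same_col {p q : ℕ × ℕ} (hp : p ∈ skewCells l m) (hq : q ∈ skewCells l m)
    (h : p.2 = q.2) : p = q := by
  rcases lt_trichotomy p.1 q.1 with h1 | h1 | h1
  · exact absurd (rows_cols hL hbar hp hq h1) (by omega)
  · exact Prod.ext h1 h
  · exact absurd (rows_cols hL hbar hq hp h1) (by omega)

theorem col_mono {p q : ℕ × ℕ} (hp : p ∈ skewCells l m) (hq : q ∈ skewCells l m)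
    (h : p.2 < q.2) : ctZ p < ctZ q := by
  have hr : q.1 ≤ p.1 := by
    by_contra hc
    exact absurd (rows_cols hL hbar hp hq (by omega)) (by omega)
  unfold ctZ; omega

theorem diff_rows {p q : ℕ × ℕ} (hp : p ∈ skewCells l m) (hq : q ∈ skewCells l m)
    (h : p.1 < q.1) : ctZ q + 2 ≤ ctZ p := by
  have := rows_cols hL hbar hp hq h
  unfold ctZ; omega

theorem ct_inj {p q : ℕ × ℕ} (hp : p ∈ skewCells l m) (hq : q ∈ skewCells l m)
    (h : ctZ p = ctZ q) : p = q := by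
  rcases lt_trichotomy p.2 q.2 with h1 | h1 | h1
  · exact absurd (col_mono hL hbar hp hq h1) (by omega)
  · exact same_col hL hbar hp hq h1
  · exact absurd (col_mono hL hbar hq hp h1) (by omega)

theorem ct_succ_same_row {p q : ℕ × ℕ} (hp : p ∈ skewCells l m) (hq : q ∈ skewCells l m)
    (h : ctZ q = ctZ p + 1) : p.1 = q.1 ∧ q.2 = p.2 + 1 := by
  have hr : p.1 = q.1 := by
    rcases lt_trichotomy p.1 q.1 with h1 | h1 | h1
    · exact absurd (diff_rows hL hbar hp hq h1) (by omega)
    · exact h1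
    · exact absurd (diff_rows hL hbar hq hp h1) (by omega)
  refine ⟨hr, ?_⟩
  unfold ctZ at h; omega


variable {n : ℕ}


noncomputable def cellOf (l m : ℕ → ℕ) (t : ℕ × ℕ → ℕ) (v : ℕ) : ℕ × ℕ :=
  if h : ∃ p ∈ skewCells l m, t p = v then h.choose else (0, 0)

omit hL hbar in
theorem cellOf_spec {t : ℕ × ℕ → ℕ} (ht : IsSkewSYT l m n t) {v : ℕ}
    (hv : 1 ≤ v) (hvn : v ≤ n) :
    cellOf l m t v ∈ skewCells l m ∧ t (cellOf l m t v) = v := by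
  have hex : ∃ p ∈ skewCells l m, t p = v := by
    have := ht.1.2.2 (Set.mem_Icc.mpr ⟨hv, hvn⟩)
    rcases this with ⟨p, hp, hpv⟩
    exact ⟨p, hp, hpv⟩
  rw [cellOf, dif_pos hex]
  exact hex.choose_spec

omit hL hbar in
theorem cellOf_unique {t : ℕ × ℕ → ℕ} (ht : IsSkewSYT l m n t) {v : ℕ} {p : ℕ × ℕ}
    (hp : p ∈ skewCells l m) (hpv : t p = v) : cellOf l m t v = p := by
  have hv : v ∈ Set.Icc 1 n := hpv ▸ ht.1.1 hp
  rw [Set.mem_Icc] at hv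
  have hs := cellOf_spec ht hv.1 hv.2
  exact ht.1.2.1 hs.1 hp (by rw [hs.2, hpv])

/-- content of the cell containing `v` -/
noncomputable def ctf (l m : ℕ → ℕ) (t : ℕ × ℕ → ℕ) (v : ℕ) : ℤ :=
  ctZ (cellOf l m t v)

/-- the function obtained by exchanging the values `v`, `v+1` -/
def swapFun (t : ℕ × ℕ → ℕ) (v : ℕ) : ℕ × ℕ → ℕ :=
  fun r => if t r = v then v + 1 else if t r = v + 1 then v else t r

omit hL hbar in
theorem swapFun_swapFun (t : ℕ × ℕ → ℕ) (v : ℕ) : swapFun (swapFun t v) v = t := by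
  funext r
  unfold swapFun
  by_cases h1 : t r = v
  · simp [h1]
  · by_cases h2 : t r = v + 1 <;> simp [h1, h2]





omit hL hbar in
theorem sameRow_adj {t : ℕ × ℕ → ℕ} (ht : IsSkewSYT l m n t) {v : ℕ} {p q : ℕ × ℕ}
    (hp : p ∈ skewCells l m) (hq : q ∈ skewCells l m)
    (hpv : t p = v) (hqv : t q = v + 1) (hrow : p.1 = q.1) : q.2 = p.2 + 1 := by
  have hne : p ≠ q := fun h => by rw [h, hqv] at hpv; omega
  have hcol : p.2 < q.2 := by
    rcases lt_trichotomy p.2 q.2 with h1 | h1 | h1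
    · exact h1
    · exact absurd (Prod.ext hrow h1) hne
    · have := ht.2.2.1 q hq p hp hrow.symm h1
      omega
  by_contra hc
  have hcol2 : p.2 + 1 < q.2 := by omega
  have hx : (p.1, p.2 + 1) ∈ skewCells l m := by
    rw [mem_skew] at hp hq ⊢
    have h1 : q.2 < l q.1 := hq.1
    rw [← hrow] at h1
    exact ⟨by simp; omega, by simp; omega⟩
  have h1 := ht.2.2.1 p hp (p.1, p.2 + 1) hx rfl (by simp)
  have h2 := ht.2.2.1 (p.1, p.2 + 1) hx q hq (by simp [hrow]) (by simpa using hcol2)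
  omega

theorem ctf_dichotomy {t : ℕ × ℕ → ℕ} (ht : IsSkewSYT l m n t) {v : ℕ} {p q : ℕ × ℕ}
    (hp : p ∈ skewCells l m) (hq : q ∈ skewCells l m)
    (hpv : t p = v) (hqv : t q = v + 1) :
    (p.1 = q.1 ∧ ctZ q = ctZ p + 1) ∨
    (p.1 ≠ q.1 ∧ (ctZ q + 2 ≤ ctZ p ∨ ctZ p + 2 ≤ ctZ q)) := by
  by_cases hrow : p.1 = q.1
  · left
    refine ⟨hrow, ?_⟩
    have := sameRow_adj ht hp hq hpv hqv hrow
    unfold ctZ; omega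
  · right
    refine ⟨hrow, ?_⟩
    rcases lt_or_gt_of_ne hrow with h1 | h1
    · exact Or.inl (diff_rows hL hbar hp hq h1)
    · exact Or.inr (diff_rows hL hbar hq hp h1)

theorem swap_syt {t : ℕ × ℕ → ℕ} (ht : IsSkewSYT l m n t) {v : ℕ} {p q : ℕ × ℕ}
    (hp : p ∈ skewCells l m) (hq : q ∈ skewCells l m)
    (hpv : t p = v) (hqv : t q = v + 1) (hv : 1 ≤ v)
    (hrow : p.1 ≠ q.1) : IsSkewSYT l m n (swapFun t v) := by
  have he : swapFun t v = fun r => (Equiv.swap v (v + 1)) (t r) := by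
    funext r
    rw [swapFun, Equiv.swap_apply_def]
  have hvn : v + 1 ≤ n := by
    have := ht.1.1 hq
    rw [hqv] at this
    exact this.2
  have hbij : Set.BijOn (swapFun t v) (skewCells l m) (Set.Icc 1 n) := by
    rw [he]
    have hsw : Set.BijOn (Equiv.swap v (v + 1)) (Set.Icc 1 n) (Set.Icc 1 n) := by
      refine ⟨?_, (Equiv.injective _).injOn, ?_⟩
      · intro x hx
        rw [Set.mem_Icc] at hx ⊢
        rw [Equiv.swap_apply_def]
        split_ifs <;> omega
      · intro y hy
        refine ⟨Equiv.swap v (v + 1) y, ?_, by simp⟩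
        rw [Set.mem_Icc] at hy ⊢
        rw [Equiv.swap_apply_def]
        split_ifs <;> omega
    exact hsw.comp ht.1
  refine ⟨hbij, ?_, ?_, ?_⟩
  · intro r hr
    have h0 := ht.2.1 r hr
    simp only [swapFun, h0]
    rw [if_neg (by omega : ¬(0 = v)), if_neg (by omega : ¬(0 = v + 1))]
  · intro x hx y hy hxy hlt
    have hval := ht.2.2.1 x hx y hy hxy hlt
    simp only [swapFun]
    by_cases h1 : t x = v
    · have hxp : x = p := ht.1.2.1 hx hp (by rw [h1, hpv])
      rw [if_pos h1]
      have h2 : t y ≠ v + 1 := by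
        intro h
        have hyq : y = q := ht.1.2.1 hy hq (by rw [h, hqv])
        exact hrow (by rw [← hxp, ← hyq, hxy])
      rw [if_neg (by omega), if_neg h2]
      omega
    · rw [if_neg h1]
      by_cases h2 : t x = v + 1
      · rw [if_pos h2, if_neg (by omega : ¬ t y = v), if_neg (by omega : ¬ t y = v + 1)]
        omega
      · rw [if_neg h2]
        by_cases h3 : t y = v
        · rw [if_pos h3]; omega
        · rw [if_neg h3]
          by_cases h4 : t y = v + 1
          · rw [if_pos h4]; omega
          · rw [if_neg h4]; exact hval
  · intro x hx y hy hxy hlt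
    exact absurd (rows_cols hL hbar hx hy hlt) (by omega)

omit hL hbar in
theorem cellOf_swapFun {t : ℕ × ℕ → ℕ} (ht : IsSkewSYT l m n t) {v : ℕ} {p q : ℕ × ℕ}
    (hp : p ∈ skewCells l m) (hq : q ∈ skewCells l m)
    (hpv : t p = v) (hqv : t q = v + 1)
    (ht' : IsSkewSYT l m n (swapFun t v)) :
    cellOf l m (swapFun t v) v = q ∧
    cellOf l m (swapFun t v) (v + 1) = p ∧
    ∀ w, w ≠ v → w ≠ v + 1 → cellOf l m (swapFun t v) w = cellOf l m t w := by
  have hv : 1 ≤ v ∧ v + 1 ≤ n := by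
    have h1 := ht.1.1 hp; have h2 := ht.1.1 hq
    rw [hpv] at h1; rw [hqv] at h2
    exact ⟨h1.1, h2.2⟩
  refine ⟨?_, ?_, ?_⟩
  · refine cellOf_unique ht' hq ?_
    rw [swapFun, hqv, if_neg (by omega), if_pos rfl]
  · refine cellOf_unique ht' hp ?_
    rw [swapFun, hpv, if_pos rfl]
  · intro w hw1 hw2
    by_cases hex : ∃ r ∈ skewCells l m, t r = w
    · rcases hex with ⟨r, hr, hrw⟩
      have h1 : cellOf l m t w = r := cellOf_unique ht hr hrw
      have h2 : cellOf l m (swapFun t v) w = r := by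
        refine cellOf_unique ht' hr ?_
        rw [swapFun, hrw, if_neg hw1, if_neg hw2]
      rw [h1, h2]
    · have hex' : ¬ ∃ r ∈ skewCells l m, swapFun t v r = w := by
        rintro ⟨r, hr, hrw⟩
        rw [swapFun] at hrw
        apply hex
        by_cases h1 : t r = v
        · rw [if_pos h1] at hrw; exact ⟨q, hq, by omega⟩
        · rw [if_neg h1] at hrw
          by_cases h2 : t r = v + 1
          · rw [if_pos h2] at hrw; exact ⟨p, hp, by omega⟩
          · rw [if_neg h2] at hrw; exact ⟨r, hr, hrw⟩
      rw [cellOf, dif_neg hex', cellOf, dif_neg hex]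


/-! ## the coefficient function -/

noncomputable def gg (d : ℤ) : ℝ := Real.sqrt (((d : ℝ) - 1) / ((d : ℝ) + 1))
noncomputable def hh (d : ℤ) : ℝ := if 1 ≤ d then gg d else 1

omit hL hbar in
theorem gg_pos {d : ℤ} (hd : d ≤ -2 ∨ 2 ≤ d) : 0 < gg d := by
  apply Real.sqrt_pos.mpr
  rcases hd with hd | hd
  · apply div_pos_iff.mpr
    right
    constructor <;> [skip; skip] <;>
      · have : (d : ℝ) ≤ -2 := by exact_mod_cast hd
        linarith
  · apply div_pos_iff.mpr
    left
    constructor <;>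
      · have : (2 : ℝ) ≤ (d : ℝ) := by exact_mod_cast hd
        linarith

omit hL hbar in
theorem hh_mul (r : ℤ) (hr : r ≤ -2 ∨ 2 ≤ r) : hh r = gg r * hh (-r) := by
  rcases hr with hr | hr
  · have hR : (r : ℝ) ≤ -2 := by exact_mod_cast hr
    rw [hh, if_neg (by omega), hh, if_pos (by omega), gg, gg]
    have h1 : 0 ≤ ((r:ℝ) - 1) / ((r:ℝ) + 1) :=
      le_of_lt (div_pos_iff.mpr (Or.inr ⟨by linarith, by linarith⟩))
    rw [← Real.sqrt_mul h1]
    have hne1 : (r:ℝ) + 1 ≠ 0 := by intro h; nlinarith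
    have hne2 : -(r:ℝ) + 1 ≠ 0 := by intro h; nlinarith
    have h2 : (((r:ℝ) - 1) / ((r:ℝ) + 1)) * (((((-r : ℤ)) : ℝ) - 1) / ((((-r : ℤ)) : ℝ) + 1))
        = 1 := by
      push_cast
      field_simp
      ring
    rw [h2, Real.sqrt_one]
  · rw [hh, if_pos (by omega), hh, if_neg (by omega), mul_one]

omit hL hbar in
theorem key_identity (r : ℤ) (hr : r ≤ -2 ∨ 2 ≤ r) :
    ((r : ℝ))⁻¹ + gg r * Real.sqrt (1 - (((r : ℝ))⁻¹) ^ 2) = 1 := by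
  have hR : (r : ℝ) ≤ -2 ∨ 2 ≤ (r : ℝ) := by
    rcases hr with h | h
    · exact Or.inl (by exact_mod_cast h)
    · exact Or.inr (by exact_mod_cast h)
  set R := (r : ℝ) with hRd
  have hR0 : R ≠ 0 := by rcases hR with h | h <;> intro hc <;> rw [hc] at h <;> linarith
  have hR1 : R + 1 ≠ 0 := by rcases hR with h | h <;> intro hc <;> nlinarith
  have h1 : 0 ≤ (R - 1) / (R + 1) := by
    rcases hR with h | h
    · apply le_of_lt; apply div_pos_iff.mpr; right; constructor <;> linarith
    · apply div_nonneg <;> linarith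
  have h2 : (R - 1) / (R + 1) * (1 - R⁻¹ ^ 2) = ((R - 1) / R) ^ 2 := by
    field_simp
    ring
  rw [gg, ← hRd, ← Real.sqrt_mul h1, h2, Real.sqrt_sq ?pos]
  case pos =>
    rcases hR with h | h
    · apply le_of_lt; apply div_pos_iff.mpr; right; constructor <;> linarith
    · apply div_nonneg <;> linarith
  field_simp
  ring

omit hL hbar in
theorem sqrt_one_sub_ne {r : ℤ} (hr : r ≤ -2 ∨ 2 ≤ r) :
    Real.sqrt (1 - (((r : ℝ))⁻¹) ^ 2) ≠ 0 := by
  have hR : (r : ℝ) ≤ -2 ∨ 2 ≤ (r : ℝ) := by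
    rcases hr with h | h
    · exact Or.inl (by exact_mod_cast h)
    · exact Or.inr (by exact_mod_cast h)
  have h4 : (2:ℝ) ≤ |(r:ℝ)| := by
    rcases hR with h | h
    · rw [abs_of_nonpos (by linarith)]; linarith
    · rw [abs_of_nonneg (by linarith)]; linarith
  have h0 : ((r:ℝ))⁻¹ ^ 2 < 1 := by
    have h2 : (4:ℝ) ≤ (r:ℝ) ^ 2 := by rcases hR with h | h <;> nlinarith
    have h3 : ((r:ℝ))⁻¹ ^ 2 * (r:ℝ) ^ 2 = 1 := by
      have : (r:ℝ) ≠ 0 := by rcases hR with h | h <;> intro hc <;> rw [hc] at h <;> linarith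
      field_simp
    have h5 := mul_le_mul_of_nonneg_left h2 (sq_nonneg ((r:ℝ))⁻¹)
    rw [h3] at h5
    nlinarith [sq_nonneg ((r:ℝ))⁻¹]
  have : 0 < 1 - ((r:ℝ))⁻¹ ^ 2 := by linarith
  positivity


noncomputable def bfac (l m : ℕ → ℕ) (t : ℕ × ℕ → ℕ) (x : ℕ × ℕ) : ℝ :=
  if x.1 < x.2 then hh (ctf l m t x.1 - ctf l m t x.2) else 1

noncomputable def betaF (l m : ℕ → ℕ) (n : ℕ) (t : ℕ × ℕ → ℕ) : ℝ :=
  ∏ x ∈ Finset.Icc 1 n ×ˢ Finset.Icc 1 n, bfac l m t x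

theorem inv_ge_two {t : ℕ × ℕ → ℕ} (ht : IsSkewSYT l m n t) {j k : ℕ}
    (hj : 1 ≤ j) (hjk : j < k) (hk : k ≤ n) (h1 : 1 ≤ ctf l m t j - ctf l m t k) :
    2 ≤ ctf l m t j - ctf l m t k := by
  by_contra hc
  have hd : ctf l m t j = ctf l m t k + 1 := by omega
  obtain ⟨hpj, hpjv⟩ := cellOf_spec ht hj (by omega)
  obtain ⟨hpk, hpkv⟩ := cellOf_spec ht (v := k) (by omega) hk
  have := ct_succ_same_row hL hbar hpk hpj hd
  have := ht.2.2.1 _ hpk _ hpj this.1 (by omega)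
  omega

theorem betaF_pos {t : ℕ × ℕ → ℕ} (ht : IsSkewSYT l m n t) : 0 < betaF l m n t := by
  apply Finset.prod_pos
  intro x hx
  rw [Finset.mem_product, Finset.mem_Icc, Finset.mem_Icc] at hx
  rw [bfac]
  split_ifs with h1
  · rw [hh]
    split_ifs with h2
    · exact gg_pos (Or.inr (inv_ge_two hL hbar ht hx.1.1 h1 hx.2.2 h2))
    · norm_num
  · norm_num

theorem betaF_rev {t : ℕ × ℕ → ℕ} (ht : IsSkewSYT l m n t)
    (hcm : ∀ p ∈ skewCells l m, ∀ q ∈ skewCells l m, p.2 < q.2 → t p < t q) :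
    betaF l m n t = 1 := by
  apply Finset.prod_eq_one
  intro x hx
  rw [Finset.mem_product, Finset.mem_Icc, Finset.mem_Icc] at hx
  rw [bfac]
  split_ifs with h1
  · obtain ⟨hp1, hv1⟩ := cellOf_spec ht hx.1.1 hx.1.2
    obtain ⟨hp2, hv2⟩ := cellOf_spec ht hx.2.1 hx.2.2
    have hcol : (cellOf l m t x.1).2 < (cellOf l m t x.2).2 := by
      rcases lt_trichotomy (cellOf l m t x.1).2 (cellOf l m t x.2).2 with h | h | h
      · exact h
      · have := same_col hL hbar hp1 hp2 h
        rw [this, hv2] at hv1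
        omega
      · have := hcm _ hp2 _ hp1 h
        omega
    have := col_mono hL hbar hp1 hp2 hcol
    rw [hh, if_neg (by unfold ctf; omega)]
  · rfl

theorem betaF_swap {t : ℕ × ℕ → ℕ} (ht : IsSkewSYT l m n t) {v : ℕ} {p q : ℕ × ℕ}
    (hp : p ∈ skewCells l m) (hq : q ∈ skewCells l m)
    (hpv : t p = v) (hqv : t q = v + 1) (hv : 1 ≤ v)
    (hrow : p.1 ≠ q.1) :
    betaF l m n (swapFun t v) = gg (ctZ q - ctZ p) * betaF l m n t := by
  have hvn : v + 1 ≤ n := by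
    have := ht.1.1 hq; rw [hqv] at this; exact this.2
  have ht'' : IsSkewSYT l m n (swapFun t v) := swap_syt hL hbar ht hp hq hpv hqv hv hrow
  obtain ⟨hc1, hc2, hc3⟩ := cellOf_swapFun ht hp hq hpv hqv ht''
  have hcp : cellOf l m t v = p := cellOf_unique ht hp hpv
  have hcq : cellOf l m t (v + 1) = q := cellOf_unique ht hq hqv
  set r := ctZ q - ctZ p with hrd
  have hr : r ≤ -2 ∨ 2 ≤ r := by
    rcases ctf_dichotomy hL hbar ht hp hq hpv hqv with ⟨h, _⟩ | ⟨_, h⟩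
    · exact absurd h hrow
    · omega
  set ee : ℕ → ℕ := fun w => if w = v then v + 1 else if w = v + 1 then v else w with heed
  have hee : ∀ w, ee (ee w) = w := by
    intro w
    simp only [heed]
    split_ifs <;> omega
  have heev : ee v = v + 1 := by
    simp only [heed]; split_ifs <;> omega
  have heev1 : ee (v + 1) = v := by
    simp only [heed]; split_ifs <;> omega
  have hctf : ∀ w, ctf l m (swapFun t v) w = ctf l m t (ee w) := by
    intro w
    by_cases h1 : w = v
    · rw [h1, heev, ctf, hc1, ctf, hcq]
    · by_cases h2 : w = v + 1
      · rw [h2, heev1, ctf, hc2, ctf, hcp]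
      · simp only [heed, if_neg h1, if_neg h2]
        rw [ctf, hc3 w h1 h2, ctf]
  set A := Finset.Icc 1 n ×ˢ Finset.Icc 1 n with hAd
  set σ : ℕ × ℕ → ℕ × ℕ := fun x => (ee x.1, ee x.2) with hσd
  have hσσ : ∀ x, σ (σ x) = x := fun x => Prod.ext (hee x.1) (hee x.2)
  have hσA : ∀ x ∈ A, σ x ∈ A := by
    intro x hx
    rw [hAd, Finset.mem_product, Finset.mem_Icc, Finset.mem_Icc] at hx ⊢
    simp only [hσd, heed]
    split_ifs <;> omega
  have step1 : betaF l m n (swapFun t v) =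
      ∏ x ∈ A, bfac l m (swapFun t v) (σ x) := by
    rw [betaF, ← hAd]
    refine (Finset.prod_nbij (i := σ) hσA ?_ ?_ (fun a _ => rfl)).symm
    · intro x _ y _ h
      rw [← hσσ x, h, hσσ]
    · intro y hy
      exact ⟨σ y, Finset.mem_coe.mpr (hσA y (Finset.mem_coe.mp hy)), hσσ y⟩
  have step2 : ∀ x ∈ (A.erase (v, v + 1)).erase (v + 1, v),
      bfac l m (swapFun t v) (σ x) = bfac l m t x := by
    intro x hx
    have hx2 : x ≠ (v + 1, v) := (Finset.mem_erase.mp hx).1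
    have hx1 : x ≠ (v, v + 1) := (Finset.mem_erase.mp (Finset.mem_erase.mp hx).2).1
    have hne1 : ¬(x.1 = v ∧ x.2 = v + 1) := fun ⟨a, b⟩ => hx1 (Prod.ext a b)
    have hne2 : ¬(x.1 = v + 1 ∧ x.2 = v) := fun ⟨a, b⟩ => hx2 (Prod.ext a b)
    have hiff : ((σ x).1 < (σ x).2) ↔ (x.1 < x.2) := by
      simp only [hσd, heed]
      split_ifs <;> omega
    simp only [bfac, hσd]
    simp only [hσd] at hiff
    rw [hctf, hctf, hee, hee]
    simp only [hiff]
  have hmem1 : ((v, v + 1) : ℕ × ℕ) ∈ A := by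
    rw [hAd, Finset.mem_product, Finset.mem_Icc, Finset.mem_Icc]
    omega
  have hmem2 : ((v + 1, v) : ℕ × ℕ) ∈ A.erase (v, v + 1) := by
    rw [Finset.mem_erase]
    refine ⟨fun h => absurd (congrArg Prod.fst h) (by simp), ?_⟩
    rw [hAd, Finset.mem_product, Finset.mem_Icc, Finset.mem_Icc]
    omega
  have hF1 : bfac l m (swapFun t v) (σ (v, v + 1)) = 1 := by
    have hs : σ (v, v + 1) = (v + 1, v) := by
      simp only [hσd]
      rw [heev, heev1]
    rw [hs, bfac, if_neg (by omega)]
  have hF2 : bfac l m (swapFun t v) (σ (v + 1, v)) = hh r := by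
    have hs : σ (v + 1, v) = (v, v + 1) := by
      simp only [hσd]
      rw [heev, heev1]
    rw [hs, bfac, if_pos (by omega : ((v, v+1) : ℕ × ℕ).1 < ((v, v+1) : ℕ × ℕ).2)]
    rw [hctf, hctf, heev, heev1, ctf, ctf, hcp, hcq]
  have hG1 : bfac l m t (v, v + 1) = hh (-r) := by
    rw [bfac, if_pos (by omega : ((v, v+1) : ℕ × ℕ).1 < ((v, v+1) : ℕ × ℕ).2)]
    rw [ctf, ctf, hcp, hcq]
    congr 1
    omega
  have hG2 : bfac l m t (v + 1, v) = 1 := by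
    rw [bfac, if_neg (by omega)]
  have expand1 : betaF l m n (swapFun t v) =
      1 * (hh r * ∏ x ∈ (A.erase (v, v + 1)).erase (v + 1, v), bfac l m t x) := by
    rw [step1, ← Finset.mul_prod_erase A _ hmem1, ← Finset.mul_prod_erase _ _ hmem2,
      hF1, hF2]
    rw [Finset.prod_congr rfl step2]
  have expand2 : betaF l m n t =
      hh (-r) * (1 * ∏ x ∈ (A.erase (v, v + 1)).erase (v + 1, v), bfac l m t x) := by
    rw [betaF, ← hAd, ← Finset.mul_prod_erase A _ hmem1, ← Finset.mul_prod_erase _ _ hmem2,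
      hG1, hG2]
  rw [expand1, expand2, one_mul, one_mul, ← mul_assoc, ← hh_mul r hr]


theorem rank_eq (hfin : (skewCells l m).Finite) {t : ℕ × ℕ → ℕ} (ht : IsSkewSYT l m n t)
    (hcm : ∀ p ∈ skewCells l m, ∀ q ∈ skewCells l m, p.2 < q.2 → t p < t q)
    {x : ℕ × ℕ} (hx : x ∈ skewCells l m) :
    t x = (hfin.toFinset.filter (fun y => y.2 ≤ x.2)).card := by
  have hx1 : t x ∈ Set.Icc 1 n := ht.1.1 hx
  rw [Set.mem_Icc] at hx1
  rw [eq_comm]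
  have key : (hfin.toFinset.filter (fun y => y.2 ≤ x.2)).card
      = (Finset.Icc 1 (t x)).card := by
    apply Finset.card_bij (fun y _ => t y)
    · intro y hy
      rw [Finset.mem_filter, Set.Finite.mem_toFinset] at hy
      have hy1 : t y ∈ Set.Icc 1 n := ht.1.1 hy.1
      rw [Set.mem_Icc] at hy1
      rw [Finset.mem_Icc]
      refine ⟨hy1.1, ?_⟩
      rcases lt_or_eq_of_le hy.2 with h | h
      · exact le_of_lt (hcm _ hy.1 _ hx h)
      · rw [same_col hL hbar hy.1 hx h]
    · intro y1 hy1 y2 hy2 h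
      rw [Finset.mem_filter, Set.Finite.mem_toFinset] at hy1 hy2
      exact ht.1.2.1 hy1.1 hy2.1 h
    · intro w hw
      rw [Finset.mem_Icc] at hw
      obtain ⟨y, hy, hyw⟩ := ht.1.2.2 (Set.mem_Icc.mpr ⟨hw.1, le_trans hw.2 hx1.2⟩)
      refine ⟨y, ?_, hyw⟩
      rw [Finset.mem_filter, Set.Finite.mem_toFinset]
      refine ⟨hy, ?_⟩
      by_contra hc
      have := hcm _ hx _ hy (by omega)
      omega
  rw [key, Nat.card_Icc]
  omega

theorem syt_unique_colmono {t t' : ℕ × ℕ → ℕ}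
    (ht : IsSkewSYT l m n t) (ht' : IsSkewSYT l m n t')
    (hcm : ∀ p ∈ skewCells l m, ∀ q ∈ skewCells l m, p.2 < q.2 → t p < t q)
    (hcm' : ∀ p ∈ skewCells l m, ∀ q ∈ skewCells l m, p.2 < q.2 → t' p < t' q) :
    t = t' := by
  have hfin : (skewCells l m).Finite := by
    apply Set.Finite.of_finite_image (f := t)
    · rw [ht.1.image_eq]
      exact Set.finite_Icc 1 n
    · exact ht.1.2.1
  funext x
  by_cases hx : x ∈ skewCells l m
  · rw [rank_eq hL hbar hfin ht hcm hx, rank_eq hL hbar hfin ht' hcm' hx]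
  · rw [ht.2.1 x hx, ht'.2.1 x hx]

omit hL hbar in
theorem ctf_lt_of_no_descent {t : ℕ × ℕ → ℕ}
    (hnd : ∀ v, 1 ≤ v → v + 1 ≤ n → ctf l m t v < ctf l m t (v + 1)) :
    ∀ a b, 1 ≤ a → a < b → b ≤ n → ctf l m t a < ctf l m t b := by
  intro a b ha hab
  induction b, hab using Nat.le_induction with
  | base => exact fun h => hnd a ha h
  | succ b hb ih =>
    intro h
    exact lt_trans (ih (by omega)) (hnd b (by omega) h)

theorem colmono_of_no_descent {t : ℕ × ℕ → ℕ} (ht : IsSkewSYT l m n t)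
    (hnd : ∀ v, 1 ≤ v → v + 1 ≤ n → ctf l m t v < ctf l m t (v + 1)) :
    ∀ p ∈ skewCells l m, ∀ q ∈ skewCells l m, p.2 < q.2 → t p < t q := by
  intro p hp q hq hcol
  have hct := col_mono hL hbar hp hq hcol
  have h1 := Set.mem_Icc.mp (ht.1.1 hp)
  have h2 := Set.mem_Icc.mp (ht.1.1 hq)
  have hca : cellOf l m t (t p) = p := cellOf_unique ht hp rfl
  have hcb : cellOf l m t (t q) = q := cellOf_unique ht hq rfl
  rcases lt_trichotomy (t p) (t q) with h | h | h
  · exact h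
  · exact absurd (ht.1.2.1 hp hq h) (by intro he; rw [he] at hcol; omega)
  · have := ctf_lt_of_no_descent hnd (t q) (t p) h2.1 h h1.2
    rw [ctf, ctf, hca, hcb] at this
    omega

noncomputable def KK (l m : ℕ → ℕ) (n : ℕ) (t : ℕ × ℕ → ℕ) : ℕ :=
  ∑ v ∈ Finset.Icc 1 n, (n - v) * (cellOf l m t v).2

theorem KK_swap_lt {t : ℕ × ℕ → ℕ} (ht : IsSkewSYT l m n t) {v : ℕ} {p q : ℕ × ℕ}
    (hp : p ∈ skewCells l m) (hq : q ∈ skewCells l m)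
    (hpv : t p = v) (hqv : t q = v + 1) (hv : 1 ≤ v)
    (hdesc : ctZ q < ctZ p) :
    KK l m n (swapFun t v) < KK l m n t := by
  have hvn : v + 1 ≤ n := by
    have := ht.1.1 hq; rw [hqv] at this; exact this.2
  have hrow : p.1 ≠ q.1 := by
    intro h
    have := sameRow_adj ht hp hq hpv hqv h
    unfold ctZ at hdesc
    omega
  have hcol : q.2 < p.2 := by
    rcases lt_trichotomy q.2 p.2 with h | h | h
    · exact h
    · exact absurd (same_col hL hbar hq hp h) (by intro he; rw [he, hpv] at hqv; omega)
    · exact absurd (col_mono hL hbar hp hq h) (by omega)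
  have ht'' : IsSkewSYT l m n (swapFun t v) := swap_syt hL hbar ht hp hq hpv hqv hv hrow
  obtain ⟨hc1, hc2, hc3⟩ := cellOf_swapFun ht hp hq hpv hqv ht''
  have hcp : cellOf l m t v = p := cellOf_unique ht hp hpv
  have hcq : cellOf l m t (v + 1) = q := cellOf_unique ht hq hqv
  have hm1 : v ∈ Finset.Icc 1 n := Finset.mem_Icc.mpr ⟨hv, by omega⟩
  have hm2 : v + 1 ∈ (Finset.Icc 1 n).erase v :=
    Finset.mem_erase.mpr ⟨by omega, Finset.mem_Icc.mpr (by omega)⟩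
  have hrest : ∑ w ∈ ((Finset.Icc 1 n).erase v).erase (v + 1),
        (n - w) * (cellOf l m (swapFun t v) w).2
      = ∑ w ∈ ((Finset.Icc 1 n).erase v).erase (v + 1), (n - w) * (cellOf l m t w).2 := by
    apply Finset.sum_congr rfl
    intro w hw
    have hw1 : w ≠ v + 1 := (Finset.mem_erase.mp hw).1
    have hw2 : w ≠ v := (Finset.mem_erase.mp (Finset.mem_erase.mp hw).2).1
    rw [hc3 w hw2 hw1]
  rw [KK, KK, ← Finset.add_sum_erase _ _ hm1, ← Finset.add_sum_erase _ _ hm2,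
    ← Finset.add_sum_erase _ (fun w => (n - w) * (cellOf l m t w).2) hm1,
    ← Finset.add_sum_erase _ (fun w => (n - w) * (cellOf l m t w).2) hm2,
    hrest, hc1, hc2, hcp, hcq]
  have hB : n - v = (n - (v + 1)) + 1 := by omega
  rw [hB]
  nlinarith [Nat.sub_le n (v + 1)]


omit hL hbar in
theorem invariant_of_swaps {N : ℕ} {V : Type} [AddCommGroup V] [Module ℝ V]
    (ρ : Representation ℝ (Equiv.Perm (Fin N)) V) (v : V)
    (h : ∀ (j : ℕ) (hj1 : 1 ≤ j) (hjn : j < N),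
      ρ (Equiv.swap (⟨j - 1, by omega⟩ : Fin N) ⟨j, hjn⟩) v = v) :
    ∀ g, ρ g v = v := by
  cases N with
  | zero =>
    intro g
    rw [Subsingleton.elim g 1, map_one, Module.End.one_apply]
  | succ n0 =>
    intro g
    have hg : g ∈ Submonoid.closure
        (Set.range fun i : Fin n0 => Equiv.swap i.castSucc i.succ) := by
      rw [Equiv.Perm.mclosure_swap_castSucc_succ]
      trivial
    induction hg using Submonoid.closure_induction with
    | mem x hx =>
      obtain ⟨i, rfl⟩ := hx
      have hi : (i : ℕ) + 1 < n0 + 1 := by omega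
      show ρ (Equiv.swap i.castSucc i.succ) v = v
      rw [show Equiv.swap i.castSucc i.succ
          = Equiv.swap (⟨(i : ℕ) + 1 - 1, by omega⟩ : Fin (n0 + 1)) ⟨(i : ℕ) + 1, hi⟩ from by
        congr 1 <;> exact Fin.ext (by simp)]
      exact h ((i : ℕ) + 1) (by omega) hi
    | one => rw [map_one, Module.End.one_apply]
    | mul x y hx hy ihx ihy => rw [map_mul, Module.End.mul_apply, ihy, ihx]

omit hL hbar in
theorem repr_sum {ι : Type} [Fintype ι] {V : Type} [AddCommGroup V] [Module ℝ V]
    (Φ : Module.Basis ι ℝ V) (c : ι → ℝ) (T0 : ι) :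
    Φ.repr (∑ T, c T • Φ T) T0 = c T0 := by
  classical
  rw [map_sum, Finsupp.finset_sum_apply]
  rw [Finset.sum_eq_single T0]
  · simp
  · intro b _ hb
    simp [Finsupp.single_apply, hb]
  · intro hT0
    exact absurd (Finset.mem_univ T0) hT0


/-! ## assembly -/

noncomputable def RTf (l m : ℕ → ℕ) (t : ℕ × ℕ → ℕ) (j : ℕ) : ℤ :=
  ctf l m t (j + 1) - ctf l m t j

noncomputable def sigmaT {l m : ℕ → ℕ} {n : ℕ} (j : ℕ)
    (T : {t : ℕ × ℕ → ℕ // IsSkewSYT l m n t}) : {t : ℕ × ℕ → ℕ // IsSkewSYT l m n t} :=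
  if h : IsSkewSYT l m n (swapFun T.1 j) then ⟨_, h⟩ else T

omit hL hbar in
theorem sigmaT_invol (j : ℕ) : Function.Involutive (sigmaT (l := l) (m := m) (n := n) j) := by
  intro T
  by_cases h : IsSkewSYT l m n (swapFun T.1 j)
  · have h1 : sigmaT j T = ⟨swapFun T.1 j, h⟩ := dif_pos h
    have hc : IsSkewSYT l m n (swapFun (swapFun T.1 j) j) := by
      rw [swapFun_swapFun]
      exact T.2
    rw [h1]
    have h2 : sigmaT j (⟨swapFun T.1 j, h⟩ : {t : ℕ × ℕ → ℕ // IsSkewSYT l m n t})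
        = ⟨swapFun (swapFun T.1 j) j, hc⟩ := dif_pos hc
    rw [h2]
    exact Subtype.ext (swapFun_swapFun T.1 j)
  · have h1 : sigmaT j T = T := dif_neg h
    rw [h1, h1]

theorem same_row_not_swap_syt {t : ℕ × ℕ → ℕ} (ht : IsSkewSYT l m n t) {v : ℕ} {p q : ℕ × ℕ}
    (hp : p ∈ skewCells l m) (hq : q ∈ skewCells l m)
    (hpv : t p = v) (hqv : t q = v + 1)
    (hrow : p.1 = q.1) : ¬ IsSkewSYT l m n (swapFun t v) := by
  intro hc
  have hadj := sameRow_adj ht hp hq hpv hqv hrow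
  have h1 : swapFun t v p = v + 1 := by rw [swapFun, if_pos hpv]
  have h2 : swapFun t v q = v := by
    rw [swapFun, hqv, if_neg (by omega), if_pos rfl]
  have := hc.2.2.1 p hp q hq hrow (by omega)
  omega

section Rep

variable {V : Type} [AddCommGroup V] [Module ℝ V]
variable (ρ : Representation ℝ (Equiv.Perm (Fin n)) V)
variable [Fintype {t : ℕ × ℕ → ℕ // IsSkewSYT l m n t}]
variable (Φ : Module.Basis {t : ℕ × ℕ → ℕ // IsSkewSYT l m n t} ℝ V)
variable (hΦ : ∀ (j : ℕ) (hj1 : 1 ≤ j) (hjb : j < n)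
    (T : {t : ℕ × ℕ → ℕ // IsSkewSYT l m n t})
    (p q : ℕ × ℕ), p ∈ skewCells l m → q ∈ skewCells l m →
    T.1 p = j → T.1 q = j + 1 →
    ρ (Equiv.swap (⟨j - 1, by omega⟩ : Fin n) ⟨j, hjb⟩) (Φ T) =
      (((((q.2 : ℤ) - (q.1 : ℤ)) - ((p.2 : ℤ) - (p.1 : ℤ))) : ℝ))⁻¹ • Φ T +
      Real.sqrt (1 - ((((((q.2 : ℤ) - (q.1 : ℤ)) - ((p.2 : ℤ) - (p.1 : ℤ))) : ℝ))⁻¹) ^ 2) •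
        (if h : IsSkewSYT l m n
            (fun r => if T.1 r = j then j + 1 else if T.1 r = j + 1 then j else T.1 r)
         then Φ ⟨_, h⟩ else 0))

include hΦ

theorem rho_gen (j : ℕ) (hj1 : 1 ≤ j) (hjn : j < n)
    (T : {t : ℕ × ℕ → ℕ // IsSkewSYT l m n t}) :
    ρ (Equiv.swap (⟨j - 1, by omega⟩ : Fin n) ⟨j, hjn⟩) (Φ T) =
      ((RTf l m T.1 j : ℝ))⁻¹ • Φ T +
      Real.sqrt (1 - ((RTf l m T.1 j : ℝ))⁻¹ ^ 2) • Φ (sigmaT j T) := by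
  obtain ⟨hp, hpv⟩ := cellOf_spec T.2 hj1 (le_of_lt hjn)
  obtain ⟨hq, hqv⟩ := cellOf_spec T.2 (v := j + 1) (by omega) hjn
  have H := hΦ j hj1 hjn T _ _ hp hq hpv hqv
  have hcast : ((((cellOf l m T.1 (j+1)).2 : ℤ) - ((cellOf l m T.1 (j+1)).1 : ℤ) : ℝ))
      - (((cellOf l m T.1 j).2 : ℤ) - ((cellOf l m T.1 j).1 : ℤ) : ℝ)
      = ((RTf l m T.1 j : ℤ) : ℝ) := by
    rw [RTf, ctf, ctf, ctZ, ctZ]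
    push_cast
    ring
  rw [H]
  by_cases hstd : IsSkewSYT l m n (swapFun T.1 j)
  · have hstd' : IsSkewSYT l m n
        (fun r => if T.1 r = j then j + 1 else if T.1 r = j + 1 then j else T.1 r) := hstd
    rw [dif_pos hstd']
    have hs : sigmaT j T = ⟨swapFun T.1 j, hstd⟩ := dif_pos hstd
    rw [hs]
    have : (⟨fun r => if T.1 r = j then j + 1 else if T.1 r = j + 1 then j else T.1 r, hstd'⟩
        : {t : ℕ × ℕ → ℕ // IsSkewSYT l m n t}) = ⟨swapFun T.1 j, hstd⟩ := rfl
    rw [this, hcast]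
  · have hstd' : ¬ IsSkewSYT l m n
        (fun r => if T.1 r = j then j + 1 else if T.1 r = j + 1 then j else T.1 r) := hstd
    rw [dif_neg hstd', smul_zero, hcast]
    have hrow : (cellOf l m T.1 j).1 = (cellOf l m T.1 (j+1)).1 := by
      by_contra hc
      exact hstd (swap_syt hL hbar T.2 hp hq hpv hqv hj1 hc)
    have hR1 : RTf l m T.1 j = 1 := by
      have := sameRow_adj T.2 hp hq hpv hqv hrow
      rw [RTf, ctf, ctf, ctZ, ctZ]
      omega
    rw [hR1]
    norm_num

theorem rho_sum (j : ℕ) (hj1 : 1 ≤ j) (hjn : j < n)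
    (c : {t : ℕ × ℕ → ℕ // IsSkewSYT l m n t} → ℝ) :
    ρ (Equiv.swap (⟨j - 1, by omega⟩ : Fin n) ⟨j, hjn⟩) (∑ T, c T • Φ T) =
      ∑ T, ((c T * ((RTf l m T.1 j : ℝ))⁻¹ +
        c (sigmaT j T) * Real.sqrt (1 - ((RTf l m T.1 j : ℝ))⁻¹ ^ 2)) • Φ T) := by
  have hbsig : ∀ T : {t : ℕ × ℕ → ℕ // IsSkewSYT l m n t}, Real.sqrt (1 - ((RTf l m (sigmaT j T).1 j : ℝ))⁻¹ ^ 2)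
      = Real.sqrt (1 - ((RTf l m T.1 j : ℝ))⁻¹ ^ 2) := by
    intro T
    by_cases hstd : IsSkewSYT l m n (swapFun T.1 j)
    · have hs : sigmaT j T = ⟨swapFun T.1 j, hstd⟩ := dif_pos hstd
      obtain ⟨hp, hpv⟩ := cellOf_spec T.2 hj1 (le_of_lt hjn)
      obtain ⟨hq, hqv⟩ := cellOf_spec T.2 (v := j + 1) (by omega) hjn
      obtain ⟨hc1, hc2, _⟩ := cellOf_swapFun T.2 hp hq hpv hqv hstd
      have hRneg : RTf l m (sigmaT j T).1 j = - RTf l m T.1 j := by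
        rw [hs]
        rw [RTf, RTf, ctf, ctf, ctf, ctf, hc1, hc2]
        ring
      rw [hRneg]
      congr 2
      push_cast
      rw [inv_neg, neg_sq]
    · rw [show sigmaT j T = T from dif_neg hstd]
  rw [map_sum]
  have step : ∀ T : {t : ℕ × ℕ → ℕ // IsSkewSYT l m n t},
      ρ (Equiv.swap (⟨j - 1, by omega⟩ : Fin n) ⟨j, hjn⟩) (c T • Φ T) =
      (c T * ((RTf l m T.1 j : ℝ))⁻¹) • Φ T +
      (c T * Real.sqrt (1 - ((RTf l m T.1 j : ℝ))⁻¹ ^ 2)) • Φ (sigmaT j T) := by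
    intro T
    rw [map_smul, rho_gen hL hbar ρ Φ hΦ j hj1 hjn T, smul_add, smul_smul, smul_smul]
  rw [Finset.sum_congr rfl (fun T _ => step T), Finset.sum_add_distrib]
  have reindex : ∑ T, (c T * Real.sqrt (1 - ((RTf l m T.1 j : ℝ))⁻¹ ^ 2)) • Φ (sigmaT j T)
      = ∑ T, (c (sigmaT j T) * Real.sqrt (1 - ((RTf l m T.1 j : ℝ))⁻¹ ^ 2)) • Φ T := by
    apply Fintype.sum_bijective (sigmaT j) (sigmaT_invol j).bijective
    intro T
    rw [(sigmaT_invol j) T, hbsig T]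
  rw [reindex, ← Finset.sum_add_distrib]
  apply Finset.sum_congr rfl
  intro T _
  rw [← add_smul]

theorem v0_invariant :
    ∀ g, ρ g (∑ T, betaF l m n T.1 • Φ T) = (∑ T, betaF l m n T.1 • Φ T) := by
  apply invariant_of_swaps
  intro j hj1 hjn
  rw [rho_sum hL hbar ρ Φ hΦ j hj1 hjn]
  apply Finset.sum_congr rfl
  intro T _
  congr 1
  obtain ⟨hp, hpv⟩ := cellOf_spec T.2 hj1 (le_of_lt hjn)
  obtain ⟨hq, hqv⟩ := cellOf_spec T.2 (v := j + 1) (by omega) hjn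
  by_cases hstd : IsSkewSYT l m n (swapFun T.1 j)
  · have hrow : (cellOf l m T.1 j).1 ≠ (cellOf l m T.1 (j+1)).1 := by
      intro hc
      exact same_row_not_swap_syt hL hbar T.2 hp hq hpv hqv hc hstd
    have hr : RTf l m T.1 j ≤ -2 ∨ 2 ≤ RTf l m T.1 j := by
      rcases ctf_dichotomy hL hbar T.2 hp hq hpv hqv with ⟨h, _⟩ | ⟨_, h⟩
      · exact absurd h hrow
      · rw [RTf, ctf, ctf]
        omega
    have hs : sigmaT j T = ⟨swapFun T.1 j, hstd⟩ := dif_pos hstd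
    have hβ : betaF l m n (sigmaT j T).1 = gg (RTf l m T.1 j) * betaF l m n T.1 := by
      rw [hs]
      have := betaF_swap hL hbar T.2 hp hq hpv hqv hj1 hrow
      rw [this, RTf, ctf, ctf]
    rw [hβ]
    have hk := key_identity (RTf l m T.1 j) hr
    set R := ((RTf l m T.1 j : ℤ) : ℝ)
    set G := gg (RTf l m T.1 j)
    set B := betaF l m n T.1
    set Q := Real.sqrt (1 - R⁻¹ ^ 2)
    linear_combination B * hk
  · have hs : sigmaT j T = T := dif_neg hstd
    have hrow : (cellOf l m T.1 j).1 = (cellOf l m T.1 (j+1)).1 := by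
      by_contra hc
      exact hstd (swap_syt hL hbar T.2 hp hq hpv hqv hj1 hc)
    have hR1 : RTf l m T.1 j = 1 := by
      have := sameRow_adj T.2 hp hq hpv hqv hrow
      rw [RTf, ctf, ctf, ctZ, ctZ]
      omega
    rw [hs, hR1]
    norm_num

theorem rec_of_invariant (c : {t : ℕ × ℕ → ℕ // IsSkewSYT l m n t} → ℝ)
    (hinv : ∀ g, ρ g (∑ T, c T • Φ T) = (∑ T, c T • Φ T)) :
    ∀ (j : ℕ), 1 ≤ j → j < n →
      ∀ T : {t : ℕ × ℕ → ℕ // IsSkewSYT l m n t}, IsSkewSYT l m n (swapFun T.1 j) →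
      c (sigmaT j T) = gg (RTf l m T.1 j) * c T := by
  intro j hj1 hjn T hstd
  have H := hinv (Equiv.swap (⟨j - 1, by omega⟩ : Fin n) ⟨j, hjn⟩)
  rw [rho_sum hL hbar ρ Φ hΦ j hj1 hjn] at H
  have heq := congrArg (fun w => (Φ.repr w) T) H
  rw [repr_sum, repr_sum] at heq
  obtain ⟨hp, hpv⟩ := cellOf_spec T.2 hj1 (le_of_lt hjn)
  obtain ⟨hq, hqv⟩ := cellOf_spec T.2 (v := j + 1) (by omega) hjn
  have hrow : (cellOf l m T.1 j).1 ≠ (cellOf l m T.1 (j+1)).1 := by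
    intro hc
    exact same_row_not_swap_syt hL hbar T.2 hp hq hpv hqv hc hstd
  have hr : RTf l m T.1 j ≤ -2 ∨ 2 ≤ RTf l m T.1 j := by
    rcases ctf_dichotomy hL hbar T.2 hp hq hpv hqv with ⟨h, _⟩ | ⟨_, h⟩
    · exact absurd h hrow
    · rw [RTf, ctf, ctf]
      omega
  have hk := key_identity (RTf l m T.1 j) hr
  have hQ := sqrt_one_sub_ne hr
  set R := ((RTf l m T.1 j : ℤ) : ℝ)
  set G := gg (RTf l m T.1 j)
  set Q := Real.sqrt (1 - R⁻¹ ^ 2)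
  apply mul_right_cancel₀ hQ
  linear_combination heq - c T * hk

theorem coeff_det (c : {t : ℕ × ℕ → ℕ // IsSkewSYT l m n t} → ℝ)
    (hrec : ∀ (j : ℕ), 1 ≤ j → j < n →
      ∀ T : {t : ℕ × ℕ → ℕ // IsSkewSYT l m n t}, IsSkewSYT l m n (swapFun T.1 j) →
      c (sigmaT j T) = gg (RTf l m T.1 j) * c T)
    (Trev : {t : ℕ × ℕ → ℕ // IsSkewSYT l m n t})
    (hTrev : ∀ p ∈ skewCells l m, ∀ q ∈ skewCells l m, p.2 < q.2 → Trev.1 p < Trev.1 q) :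
    ∀ T, c T = c Trev * betaF l m n T.1 := by
  have main : ∀ k, ∀ T : {t : ℕ × ℕ → ℕ // IsSkewSYT l m n t},
      KK l m n T.1 < k → c T = c Trev * betaF l m n T.1 := by
    intro k
    induction k with
    | zero => exact fun T h => absurd h (by omega)
    | succ k ih =>
      intro T hk
      by_cases hdes : ∃ v, 1 ≤ v ∧ v + 1 ≤ n ∧ ctf l m T.1 (v + 1) < ctf l m T.1 v
      · obtain ⟨v, hv1, hvn, hd⟩ := hdes
        obtain ⟨hp, hpv⟩ := cellOf_spec T.2 hv1 (by omega)
        obtain ⟨hq, hqv⟩ := cellOf_spec T.2 (v := v + 1) (by omega) hvn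
        have hdz : ctZ (cellOf l m T.1 (v + 1)) < ctZ (cellOf l m T.1 v) := by
          rw [ctf, ctf] at hd
          exact hd
        have hrow : (cellOf l m T.1 v).1 ≠ (cellOf l m T.1 (v + 1)).1 := by
          intro hc
          have := sameRow_adj T.2 hp hq hpv hqv hc
          unfold ctZ at hdz
          omega
        have hstd : IsSkewSYT l m n (swapFun T.1 v) :=
          swap_syt hL hbar T.2 hp hq hpv hqv hv1 hrow
        have hs : sigmaT v T = ⟨swapFun T.1 v, hstd⟩ := dif_pos hstd
        have hKK : KK l m n (sigmaT v T).1 < KK l m n T.1 := by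
          rw [hs]
          exact KK_swap_lt hL hbar T.2 hp hq hpv hqv hv1 hdz
        have hih := ih (sigmaT v T) (by omega)
        have hr2 := hrec v hv1 (by omega) T hstd
        have hβ : betaF l m n (sigmaT v T).1 = gg (RTf l m T.1 v) * betaF l m n T.1 := by
          rw [hs]
          have := betaF_swap hL hbar T.2 hp hq hpv hqv hv1 hrow
          rw [this, RTf, ctf, ctf]
        have hr : RTf l m T.1 v ≤ -2 ∨ 2 ≤ RTf l m T.1 v := by
          rcases ctf_dichotomy hL hbar T.2 hp hq hpv hqv with ⟨h, _⟩ | ⟨_, h⟩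
          · exact absurd h hrow
          · rw [RTf, ctf, ctf]
            omega
        have hgne : gg (RTf l m T.1 v) ≠ 0 := ne_of_gt (gg_pos hr)
        apply mul_left_cancel₀ hgne
        rw [← hr2, hih, hβ]
        ring
      · push_neg at hdes
        have hnd : ∀ v, 1 ≤ v → v + 1 ≤ n → ctf l m T.1 v < ctf l m T.1 (v + 1) := by
          intro v hv1 hvn
          obtain ⟨hp, hpv⟩ := cellOf_spec T.2 hv1 (by omega)
          obtain ⟨hq, hqv⟩ := cellOf_spec T.2 (v := v + 1) (by omega) hvn
          have hle := hdes v hv1 hvn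
          rcases lt_or_eq_of_le hle with h | h
          · exact h
          · rw [ctf, ctf] at h
            have := ct_inj hL hbar hq hp h.symm
            rw [this, hpv] at hqv
            omega
        have hcm := colmono_of_no_descent hL hbar T.2 hnd
        have hTeq : T = Trev := Subtype.ext (syt_unique_colmono hL hbar T.2 Trev.2 hcm hTrev)
        rw [hTeq, betaF_rev hL hbar Trev.2 hTrev, mul_one]
  exact fun T => main (KK l m n T.1 + 1) T (by omega)

end Rep

end Strip

open Strip in
/-- For a horizontal strip `λ/μ` (`λ ⊢ b`, `μ ⊢ a`, `λ̄ ⊆ μ ⊆ λ`), with Young's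
orthonormal basis `{Φ_T}` of the real skew representation `S^{λ/μ}` (indexed by
standard skew tableaux and satisfying Young's orthogonal form for the Coxeter
generators), the one-dimensional space of `S_{b-a}`-invariants is spanned by the unique
invariant element `Σ_T β_T Φ_T` with `β_{T^rev} = 1`; whenever `T'' = s_i T'` with both
standard, `β_{T''} = √((r-1)/(r+1)) β_{T'}` where `r = r_i(T') ∉ {-1,0,1}` is the axial
distance from `i+1` to `i` in `T'`; and all `β_T` are nonzero. -/
theorem stmt18 (a b : ℕ) (hab : a ≤ b) (l m : ℕ → ℕ)
    (hl : IsPartitionOfSize l b) (hm : IsPartitionOfSize m a)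
    (hbar : SubDiagram (rowBar l) m) (hsub : SubDiagram m l)
    (V : Type) [AddCommGroup V] [Module ℝ V]
    (ρ : Representation ℝ (Equiv.Perm (Fin (b - a))) V)
    [Fintype {t : ℕ × ℕ → ℕ // IsSkewSYT l m (b - a) t}]
    (Φ : Module.Basis {t : ℕ × ℕ → ℕ // IsSkewSYT l m (b - a) t} ℝ V)
    (hΦ : ∀ (j : ℕ) (hj1 : 1 ≤ j) (hjb : j < b - a)
        (T : {t : ℕ × ℕ → ℕ // IsSkewSYT l m (b - a) t})
        (p q : ℕ × ℕ), p ∈ skewCells l m → q ∈ skewCells l m →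
        T.1 p = j → T.1 q = j + 1 →
        ρ (Equiv.swap (⟨j - 1, by omega⟩ : Fin (b - a)) ⟨j, hjb⟩) (Φ T) =
          (((((q.2 : ℤ) - (q.1 : ℤ)) - ((p.2 : ℤ) - (p.1 : ℤ))) : ℝ))⁻¹ • Φ T +
          Real.sqrt (1 - ((((((q.2 : ℤ) - (q.1 : ℤ)) - ((p.2 : ℤ) - (p.1 : ℤ))) : ℝ))⁻¹) ^ 2) •
            (if h : IsSkewSYT l m (b - a)
                (fun r => if T.1 r = j then j + 1 else if T.1 r = j + 1 then j else T.1 r)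
             then Φ ⟨_, h⟩ else 0))
    (Trev : {t : ℕ × ℕ → ℕ // IsSkewSYT l m (b - a) t})
    (hTrev : ∀ p ∈ skewCells l m, ∀ q ∈ skewCells l m, p.2 < q.2 → Trev.1 p < Trev.1 q) :
    (∃! β : {t : ℕ × ℕ → ℕ // IsSkewSYT l m (b - a) t} → ℝ,
      β Trev = 1 ∧ (∑ T, β T • Φ T) ∈ invariantsUnder ρ Set.univ) ∧
    (∀ β : {t : ℕ × ℕ → ℕ // IsSkewSYT l m (b - a) t} → ℝ,
      (β Trev = 1 ∧ (∑ T, β T • Φ T) ∈ invariantsUnder ρ Set.univ) →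
      (invariantsUnder ρ Set.univ = Submodule.span ℝ {∑ T, β T • Φ T}) ∧
      (∀ T, β T ≠ 0) ∧
      (∀ (i : ℕ) (hi1 : 1 ≤ i) (hi2 : i < b - a)
        (T' T'' : {t : ℕ × ℕ → ℕ // IsSkewSYT l m (b - a) t}) (p q : ℕ × ℕ),
        p ∈ skewCells l m → q ∈ skewCells l m → T'.1 p = i → T'.1 q = i + 1 →
        (T''.1 = fun r => if T'.1 r = i then i + 1 else if T'.1 r = i + 1 then i else T'.1 r) →
        ((((q.2 : ℤ) - (q.1 : ℤ)) - ((p.2 : ℤ) - (p.1 : ℤ))) ≠ -1 ∧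
         (((q.2 : ℤ) - (q.1 : ℤ)) - ((p.2 : ℤ) - (p.1 : ℤ))) ≠ 0 ∧
         (((q.2 : ℤ) - (q.1 : ℤ)) - ((p.2 : ℤ) - (p.1 : ℤ))) ≠ 1 ∧
         β T'' = Real.sqrt (((((((q.2 : ℤ) - (q.1 : ℤ)) - ((p.2 : ℤ) - (p.1 : ℤ))) : ℝ)) - 1) /
             ((((((q.2 : ℤ) - (q.1 : ℤ)) - ((p.2 : ℤ) - (p.1 : ℤ))) : ℝ)) + 1)) * β T'))) := by
  classical
  have hL : Antitone l := hl.1.1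
  set β0 : {t : ℕ × ℕ → ℕ // IsSkewSYT l m (b - a) t} → ℝ := fun T => betaF l m (b - a) T.1
    with hβ0d
  have hrev1 : β0 Trev = 1 := betaF_rev hL hbar Trev.2 hTrev
  have hinv0 : ∀ g, ρ g (∑ T, β0 T • Φ T) = ∑ T, β0 T • Φ T :=
    v0_invariant hL hbar ρ Φ hΦ
  have hmem0 : (∑ T, β0 T • Φ T) ∈ invariantsUnder ρ Set.univ := fun g _ => hinv0 g
  have huniq : ∀ c : {t : ℕ × ℕ → ℕ // IsSkewSYT l m (b - a) t} → ℝ,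
      (c Trev = 1 ∧ (∑ T, c T • Φ T) ∈ invariantsUnder ρ Set.univ) → c = β0 := by
    rintro c ⟨hc1, hc2⟩
    have hinv : ∀ g, ρ g (∑ T, c T • Φ T) = ∑ T, c T • Φ T := fun g => hc2 g (Set.mem_univ g)
    have hrec := rec_of_invariant hL hbar ρ Φ hΦ c hinv
    have hdet := coeff_det hL hbar ρ Φ hΦ c hrec Trev hTrev
    funext T
    rw [hdet T, hc1, one_mul]
  constructor
  · exact ⟨β0, ⟨hrev1, hmem0⟩, fun c hc => huniq c hc⟩
  · intro β hβspec
    have hβeq : β = β0 := huniq β hβspec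
    refine ⟨?_, ?_, ?_⟩
    · -- span equality
      apply le_antisymm
      · intro w hw
        have hinvw : ∀ g, ρ g w = w := fun g => hw g (Set.mem_univ g)
        set c : {t : ℕ × ℕ → ℕ // IsSkewSYT l m (b - a) t} → ℝ := fun T => Φ.repr w T with hcd
        have hwsum : ∑ T, c T • Φ T = w := Φ.sum_repr w
        have hrec := rec_of_invariant hL hbar ρ Φ hΦ c (by rw [hwsum]; exact hinvw)
        have hdet := coeff_det hL hbar ρ Φ hΦ c hrec Trev hTrev
        have hw2 : w = c Trev • (∑ T, β T • Φ T) := by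
          rw [← hwsum, Finset.smul_sum]
          apply Finset.sum_congr rfl
          intro T _
          rw [hdet T, hβeq, ← smul_smul]
        rw [hw2]
        exact Submodule.smul_mem _ _ (Submodule.mem_span_singleton_self _)
      · rw [Submodule.span_singleton_le_iff_mem]
        exact hβspec.2
    · intro T
      rw [hβeq]
      exact ne_of_gt (betaF_pos hL hbar T.2)
    · intro i hi1 hi2 T' T'' p q hp hq hpi hqi hT''
      have hfun : T''.1 = swapFun T'.1 i := hT''
      have hstd : IsSkewSYT l m (b - a) (swapFun T'.1 i) := by rw [← hfun]; exact T''.2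
      have hrow : p.1 ≠ q.1 := by
        intro hc
        exact same_row_not_swap_syt hL hbar T'.2 hp hq hpi hqi hc hstd
      have hr : ctZ q - ctZ p ≤ -2 ∨ 2 ≤ ctZ q - ctZ p := by
        rcases ctf_dichotomy hL hbar T'.2 hp hq hpi hqi with ⟨h, _⟩ | ⟨_, h⟩
        · exact absurd h hrow
        · omega
      have hrz : ctZ q - ctZ p = (((q.2 : ℤ) - (q.1 : ℤ)) - ((p.2 : ℤ) - (p.1 : ℤ))) := by
        rw [ctZ, ctZ]
      refine ⟨by omega, by omega, by omega, ?_⟩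
      rw [hβeq]
      show betaF l m (b - a) T''.1 = _ * betaF l m (b - a) T'.1
      rw [hfun, betaF_swap hL hbar T'.2 hp hq hpi hqi hi1 hrow]
      congr 1
      rw [gg]
      congr 1
      rw [hrz]
      push_cast
      ring
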